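/- Let fᵢ: ℝ → ℝ (i = 1,...,N) be differentiable, strongly convex with Lipschitz gradients, let L be the Laplacian of a strongly connected weight-balanced digraph, and let α, β > 0. If (Z*, Λ*) ∈ ℝ^N × ℝ^N satisfies α∇f̃(Z*) + βLZ* + LΛ* = 0 and LZ* = 0, then Z* = y*𝟙, where y* is the unique minimizer of f(s) = Σᵢ fᵢ(s) and ∇f̃(Z) = (f₁'(z₁),...,f_N'(z_N)). -/

import Mathlib

open Matrix

theorem stmt_7 (N : ℕ) (f : Fin N → ℝ → ℝ)
    (hdiff : ∀ i, Differentiable ℝ (f i))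
    (l l' : ℝ) (hl : 0 < l) (hl' : 0 < l')
    (hsc : ∀ i, ∀ a b : ℝ, (deriv (f i) a - deriv (f i) b) * (a - b) ≥ l * (a - b) ^ 2)
    (hlip : ∀ i, ∀ a b : ℝ, |deriv (f i) a - deriv (f i) b| ≤ l' * |a - b|)
    (L : Matrix (Fin N) (Fin N) ℝ)
    (hL1 : L.mulVec (fun _ => 1) = 0)
    (hL2 : Matrix.vecMul (fun _ => (1 : ℝ)) L = 0)
    (hker : ∀ x : Fin N → ℝ, L.mulVec x = 0 → ∃ c : ℝ, x = fun _ => c)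
    (α β : ℝ) (hα : 0 < α) (hβ : 0 < β)
    (ystar : ℝ) (hystar : ∀ s : ℝ, ∑ i, f i ystar ≤ ∑ i, f i s)
    (Zstar Λstar : Fin N → ℝ)
    (heq1 : (fun i => α * deriv (f i) (Zstar i)) + β • L.mulVec Zstar + L.mulVec Λstar = 0)
    (heq2 : L.mulVec Zstar = 0) :
    Zstar = fun _ => ystar := by
  rcases Nat.eq_zero_or_pos N with hN | hN
  · subst hN; funext i; exact absurd i.2 (by omega)
  obtain ⟨c, hc⟩ := hker Zstar heq2
  -- sum of the derivatives at c is zero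
  have hsum1 : ∑ i, (L.mulVec Λstar) i = 0 := by
    have : (fun _ => (1:ℝ)) ⬝ᵥ L.mulVec Λstar = 0 := by
      rw [Matrix.dotProduct_mulVec, hL2, zero_dotProduct]
    simpa [dotProduct] using this
  have hderivc : ∑ i, deriv (f i) c = 0 := by
    have h := congrArg (fun v => ∑ i, v i) heq1
    simp only [Pi.add_apply, Pi.smul_apply, Pi.zero_apply, Finset.sum_add_distrib,
      smul_eq_mul, heq2, Pi.zero_apply, mul_zero, Finset.sum_const_zero, hsum1] at h
    have h' : ∑ i, α * deriv (f i) (Zstar i) = 0 := by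
      have hz : ∀ i, (β • L.mulVec Zstar) i = 0 := by
        intro i; simp [heq2]
      simpa [hz, hsum1, Finset.sum_add_distrib] using h
    rw [← Finset.mul_sum] at h'
    have := (mul_eq_zero.mp h').resolve_left (ne_of_gt hα)
    rw [hc] at this
    simpa using this
  -- derivative of total cost at ystar is zero
  have hderivy : ∑ i, deriv (f i) ystar = 0 := by
    have hg : ∀ x, HasDerivAt (fun s => ∑ i, f i s) (∑ i, deriv (f i) x) x := by
      intro x
      exact HasDerivAt.fun_sum (fun i _ => ((hdiff i x).hasDerivAt))
    have hmin : IsLocalMin (fun s => ∑ i, f i s) ystar :=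
      (isMinOn_univ_iff.mpr (fun s => hystar s)).isLocalMin (by simp)
    have := hmin.hasDerivAt_eq_zero (hg ystar)
    exact this
  -- strong convexity forces c = ystar
  have hge : ∑ i, (deriv (f i) c - deriv (f i) ystar) * (c - ystar) ≥
      ∑ i : Fin N, l * (c - ystar) ^ 2 :=
    Finset.sum_le_sum (fun i _ => hsc i c ystar)
  have hzero : ∑ i, (deriv (f i) c - deriv (f i) ystar) * (c - ystar) = 0 := by
    rw [← Finset.sum_mul, Finset.sum_sub_distrib, hderivc, hderivy]
    ring
  have hNl : (N : ℝ) * (l * (c - ystar) ^ 2) ≤ 0 := by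
    have : ∑ i : Fin N, l * (c - ystar) ^ 2 = (N : ℝ) * (l * (c - ystar) ^ 2) := by
      simp [Finset.sum_const, nsmul_eq_mul]
    linarith [hge, hzero, this ▸ hge]
  have hcy : c = ystar := by
    by_contra h
    have hne : c - ystar ≠ 0 := sub_ne_zero.mpr h
    have h1 : 0 < (c - ystar) ^ 2 := by positivity
    have h2 : 0 < (N : ℝ) := by exact_mod_cast hN
    nlinarith [mul_pos h2 (mul_pos hl h1)]
  rw [hc, hcy]
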